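/- If v lies in the kernel of a graph G while u is a non-kernel vertex of universal type and w a non-kernel vertex of isolated type, then deg(w) < deg(v) < deg(u); moreover, among non-kernel vertices, degrees of isolated-type vertices strictly increase with rank and degrees of universal-type vertices strictly decrease with rank. -/

import Mathlib

def IsIsolatedVx {V : Type u} (G : SimpleGraph V) (v : V) : Prop := ∀ u, ¬G.Adj v u

def IsUniversalVx {V : Type u} (G : SimpleGraph V) (v : V) : Prop := ∀ u, u ≠ v → G.Adj v u

def IsNormalG {V : Type u} (G : SimpleGraph V) : Prop :=
  (∀ v, ¬IsIsolatedVx G v) ∧ (∀ v, ¬IsUniversalVx G v)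

/-- The condition for a graph to have rank 1: it is empty, complete, or normal. -/
def Rank1Cond {V : Type u} (G : SimpleGraph V) : Prop := G = ⊥ ∨ G = ⊤ ∨ IsNormalG G

/-- The inductive rank of a finite graph. -/
inductive HasRank : ∀ {V : Type u} [Finite V], SimpleGraph V → ℕ → Prop where
  | base {V : Type u} [Finite V] (G : SimpleGraph V) :
      Rank1Cond G → HasRank G 1
  | peel {V : Type u} [Finite V] (G : SimpleGraph V) (r : ℕ) :
      ¬Rank1Cond G → ¬G.Connected →
      HasRank (G.induce {v | ¬IsIsolatedVx G v}) r → HasRank G (r + 1)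
  | compl {V : Type u} [Finite V] (G : SimpleGraph V) (r : ℕ) :
      ¬Rank1Cond G → G.Connected → HasRank Gᶜ r → HasRank G r

/-- `∂G`: the universal vertices if `G` is connected, the isolated vertices otherwise. -/
def Boundary {V : Type u} (G : SimpleGraph V) : Set V :=
  {v | (G.Connected ∧ IsUniversalVx G v) ∨ (¬G.Connected ∧ IsIsolatedVx G v)}

/-- The inductive rank of a vertex: in a rank-1 graph every vertex has rank 1;
otherwise the vertices of `∂G` have rank 1 and the remaining vertices have rank one
more than their rank in `G − ∂G`. -/
inductive VRank : ∀ {V : Type u} [Finite V], SimpleGraph V → V → ℕ → Prop where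
  | base {V : Type u} [Finite V] (G : SimpleGraph V) (v : V) :
      Rank1Cond G → VRank G v 1
  | bdry {V : Type u} [Finite V] (G : SimpleGraph V) (v : V) :
      ¬Rank1Cond G → v ∈ Boundary G → VRank G v 1
  | step {V : Type u} [Finite V] (G : SimpleGraph V) (v : V)
      (hv : v ∈ (Boundary G)ᶜ) (r : ℕ) :
      ¬Rank1Cond G → VRank (G.induce (Boundary G)ᶜ) ⟨v, hv⟩ r → VRank G v (r + 1)

/-- Universal type: adjacent to every other vertex of equal or higher rank. -/
def UnivType {V : Type u} [Finite V] (G : SimpleGraph V) (x : V) (i : ℕ) : Prop :=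
  ∀ w, w ≠ x → (∃ j, i ≤ j ∧ VRank G w j) → G.Adj x w

/-- Isolated type: adjacent to no other vertex of equal or higher rank. -/
def IsoType {V : Type u} [Finite V] (G : SimpleGraph V) (x : V) (i : ℕ) : Prop :=
  ∀ w, w ≠ x → (∃ j, i ≤ j ∧ VRank G w j) → ¬G.Adj x w

section Lemmas
variable {V : Type u}

open SimpleGraph

lemma isolated_compl {G : SimpleGraph V} {v : V} :
    IsIsolatedVx Gᶜ v ↔ IsUniversalVx G v := by
  constructor
  · intro h u hu
    by_contra hadj
    exact h u ((G.compl_adj v u).2 ⟨Ne.symm hu, hadj⟩)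
  · intro h u hadj
    rw [G.compl_adj] at hadj
    exact hadj.2 (h u (Ne.symm hadj.1))

lemma universal_compl {G : SimpleGraph V} {v : V} :
    IsUniversalVx Gᶜ v ↔ IsIsolatedVx G v := by
  constructor
  · intro h u hadj
    have hne : u ≠ v := fun h' => (G.loopless.irrefl v) (h' ▸ hadj)
    exact ((G.compl_adj v u).1 (h u hne)).2 hadj
  · intro h u hne
    exact (G.compl_adj v u).2 ⟨Ne.symm hne, h u⟩

lemma rank1_compl {G : SimpleGraph V} (h : Rank1Cond G) : Rank1Cond Gᶜ := by
  rcases h with h | h | h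
  · subst h; right; left; simp
  · subst h; left; simp
  · right; right
    exact ⟨fun v hv => h.2 v (isolated_compl.mp hv),
           fun v hv => h.1 v (universal_compl.mp hv)⟩

lemma rank1_compl_iff {G : SimpleGraph V} : Rank1Cond Gᶜ ↔ Rank1Cond G :=
  ⟨fun h => by simpa using rank1_compl h, rank1_compl⟩

end Lemmas
section Lemmas2
variable {V : Type u}

open SimpleGraph

lemma hasRank_pos : ∀ {V : Type u} [Finite V] {G : SimpleGraph V} {r : ℕ},
    HasRank G r → 1 ≤ r := by
  intro V _ G r h
  induction h with
  | base => exact le_refl 1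
  | peel => omega
  | compl G r _ _ _ ih => exact ih

lemma hasRank_one : ∀ {V : Type u} [Finite V] {G : SimpleGraph V} {r : ℕ},
    HasRank G r → r = 1 → Rank1Cond G := by
  intro V _ G r h
  induction h with
  | base _ h => exact fun _ => h
  | peel G r _ _ hr _ =>
    intro h1
    have := hasRank_pos hr
    omega
  | compl G r h _ _ ih => exact fun h1 => (rank1_compl_iff.mp (ih h1))

lemma vrank_pos {V : Type u} [Finite V] {G : SimpleGraph V} {v : V} {r : ℕ}
    (h : VRank G v r) : 1 ≤ r := by
  cases h <;> omega

lemma nonempty_of_not_rank1 {G : SimpleGraph V} (h : ¬Rank1Cond G) : Nonempty V := by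
  by_contra hne
  have : IsEmpty V := not_nonempty_iff.mp hne
  exact h (Or.inl (by ext v w; exact (IsEmpty.elim this v)))

lemma compl_connected_of_not_connected {G : SimpleGraph V} [Nonempty V]
    (h : ¬G.Connected) : Gᶜ.Connected := by
  rw [SimpleGraph.connected_iff] at h ⊢
  refine ⟨?_, ‹_›⟩
  have h' : ¬G.Preconnected := fun hp => h ⟨hp, ‹_›⟩
  rw [SimpleGraph.Preconnected] at h'
  push_neg at h'
  obtain ⟨u0, v0, huv⟩ := h'
  have key : ∀ x y : V, ¬G.Reachable x y → Gᶜ.Adj x y := by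
    intro x y hr
    rw [G.compl_adj]
    exact ⟨fun he => hr (he ▸ SimpleGraph.Reachable.refl x),
           fun ha => hr ha.reachable⟩
  intro x y
  by_cases hxy : G.Reachable x y
  · rcases eq_or_ne x y with rfl | hne
    · exact SimpleGraph.Reachable.refl x
    · have hz : ¬G.Reachable x u0 ∨ ¬G.Reachable x v0 := by
        by_contra hc
        push_neg at hc
        exact huv (hc.1.symm.trans hc.2)
      rcases hz with hz | hz
      · exact ((key x u0 hz).reachable).trans
          ((key u0 y (fun hr => hz (hxy.trans hr.symm))).reachable)
      · exact ((key x v0 hz).reachable).trans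
          ((key v0 y (fun hr => hz (hxy.trans hr.symm))).reachable)
  · exact (key x y hxy).reachable

lemma connected_isolated_eq {G : SimpleGraph V} (hc : G.Connected) {v : V}
    (hv : IsIsolatedVx G v) : ∀ u : V, u = v := by
  intro u
  have : G.Reachable v u := hc.preconnected v u
  obtain ⟨w⟩ := this
  cases w with
  | nil => rfl
  | cons ha _ => exact absurd ha (hv _)

lemma compl_not_connected {G : SimpleGraph V} (hc : G.Connected) (h : ¬Rank1Cond G) :
    ¬Gᶜ.Connected := by
  -- G has a universal vertex
  have hnormal : ¬IsNormalG G := fun hn => h (Or.inr (Or.inr hn))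
  rw [IsNormalG] at hnormal
  push_neg at hnormal
  have huniv : ∃ u, IsUniversalVx G u := by
    by_cases hi : ∃ v, IsIsolatedVx G v
    · obtain ⟨v, hv⟩ := hi
      exfalso
      have hsub := connected_isolated_eq hc hv
      apply h
      left
      ext a b
      simp only [SimpleGraph.bot_adj, iff_false]
      intro hab
      exact hab.ne ((hsub a).trans (hsub b).symm)
    · push_neg at hi
      rcases hnormal (fun v => hi v) with ⟨u, hu⟩
      exact ⟨u, hu⟩
  obtain ⟨u, hu⟩ := huniv
  intro hcc
  have hiso : IsIsolatedVx Gᶜ u := isolated_compl.mpr hu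
  have hsub := connected_isolated_eq hcc hiso
  apply h
  left
  ext a b
  simp only [SimpleGraph.bot_adj, iff_false]
  intro hab
  exact hab.ne ((hsub a).trans (hsub b).symm)

lemma hasRank_compl : ∀ {V : Type u} [Finite V] {G : SimpleGraph V} {r : ℕ},
    HasRank G r → HasRank Gᶜ r := by
  intro V _ G r h
  induction h with
  | base G h => exact HasRank.base _ (rank1_compl h)
  | @peel W _ G r h1 hc hr _ =>
    haveI : Nonempty W := nonempty_of_not_rank1 h1
    refine HasRank.compl _ _ (fun hr1 => h1 (rank1_compl_iff.mp hr1))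
      (compl_connected_of_not_connected hc) ?_
    rw [compl_compl]
    exact HasRank.peel _ _ h1 hc hr
  | compl G r _ _ hr _ => exact hr

end Lemmas2
section Lemmas3
variable {V : Type u}

open SimpleGraph

lemma mem_boundary_conn {G : SimpleGraph V} (hc : G.Connected) {v : V} :
    v ∈ Boundary G ↔ IsUniversalVx G v := by
  simp only [Boundary, Set.mem_setOf_eq]
  exact ⟨fun h => h.elim (fun h => h.2) (fun h => absurd hc h.1),
         fun h => Or.inl ⟨hc, h⟩⟩

lemma mem_boundary_disconn {G : SimpleGraph V} (hc : ¬G.Connected) {v : V} :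
    v ∈ Boundary G ↔ IsIsolatedVx G v := by
  simp only [Boundary, Set.mem_setOf_eq]
  exact ⟨fun h => h.elim (fun h => absurd h.1 hc) (fun h => h.2),
         fun h => Or.inr ⟨hc, h⟩⟩

lemma boundary_compl_eq {G : SimpleGraph V} (hc : G.Connected) (h : ¬Rank1Cond G) :
    Boundary Gᶜ = Boundary G := by
  have hcc := compl_not_connected hc h
  ext v
  rw [mem_boundary_disconn hcc, mem_boundary_conn hc, isolated_compl]

lemma induce_compl_comm (G : SimpleGraph V) (s : Set V) :
    (Gᶜ.induce s) = (G.induce s)ᶜ := by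
  ext a b
  simp only [SimpleGraph.comap_adj, Function.Embedding.coe_subtype, SimpleGraph.compl_adj]
  constructor
  · rintro ⟨hne, hna⟩
    exact ⟨fun h => hne (congrArg Subtype.val h), hna⟩
  · rintro ⟨hne, hna⟩
    exact ⟨fun h => hne (Subtype.ext h), hna⟩

lemma hasRank_induce_congr {G : SimpleGraph V} {s t : Set V} [Finite V] {r : ℕ}
    (hst : s = t) (h : HasRank (G.induce s) r) : HasRank (G.induce t) r := by
  subst hst; exact h

lemma hasRank_boundary : ∀ {V : Type u} [Finite V] {G : SimpleGraph V} {m : ℕ},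
    HasRank G m → ¬Rank1Cond G → HasRank (G.induce (Boundary G)ᶜ) (m - 1) := by
  intro V _ G m h
  induction h with
  | base G h => exact fun h1 => absurd h h1
  | @peel W _ G r h1 hc hr _ =>
    intro _
    refine hasRank_induce_congr ?_ hr
    ext v
    simp only [Set.mem_setOf_eq, Set.mem_compl_iff, mem_boundary_disconn hc]
  | @compl W _ G r h1 hc hr ih =>
    intro _
    have h1c : ¬Rank1Cond Gᶜ := fun hr1 => h1 (rank1_compl_iff.mp hr1)
    have := ih h1c
    rw [boundary_compl_eq hc h1, induce_compl_comm] at this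
    have := hasRank_compl this
    rwa [compl_compl] at this

end Lemmas3
section Lemmas4
variable {V : Type u} [Finite V]

open SimpleGraph

lemma vrank_one_mem_boundary {G : SimpleGraph V} {v : V}
    (h1 : ¬Rank1Cond G) (h : VRank G v 1) : v ∈ Boundary G := by
  cases h with
  | base _ _ h => exact absurd h h1
  | bdry _ _ _ hb => exact hb
  | step _ _ _ _ _ h' => exact absurd (vrank_pos h') (by omega)

lemma vrank_step_inv {G : SimpleGraph V} {v : V} {r : ℕ}
    (h1 : ¬Rank1Cond G) (h : VRank G v r) (hr : 2 ≤ r) :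
    ∃ hv : v ∈ (Boundary G)ᶜ, VRank (G.induce (Boundary G)ᶜ) ⟨v, hv⟩ (r - 1) := by
  cases h with
  | base _ _ h => exact absurd h h1
  | bdry => omega
  | step _ _ hv r' _ h' => exact ⟨hv, by simpa using h'⟩

lemma vrank_boundary_rank_one {G : SimpleGraph V} {v : V} {r : ℕ}
    (h1 : ¬Rank1Cond G) (hb : v ∈ Boundary G) (h : VRank G v r) : r = 1 := by
  cases h with
  | base _ _ h => exact absurd h h1
  | bdry => rfl
  | step _ _ hv => exact absurd hb hv

lemma univType_induce {G : SimpleGraph V} {x : V} {i : ℕ}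
    (h1 : ¬Rank1Cond G) (hx : x ∈ (Boundary G)ᶜ) (h : UnivType G x i) :
    UnivType (G.induce (Boundary G)ᶜ) ⟨x, hx⟩ (i - 1) := by
  rintro w hw ⟨j, hj, hwj⟩
  have hstep : VRank G ↑w (j + 1) := VRank.step G ↑w w.2 j h1 hwj
  exact h ↑w (fun h' => hw (Subtype.ext h')) ⟨j + 1, by omega, hstep⟩

lemma isoType_induce {G : SimpleGraph V} {x : V} {i : ℕ}
    (h1 : ¬Rank1Cond G) (hx : x ∈ (Boundary G)ᶜ) (h : IsoType G x i) :
    IsoType (G.induce (Boundary G)ᶜ) ⟨x, hx⟩ (i - 1) := by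
  rintro w hw ⟨j, hj, hwj⟩
  have hstep : VRank G ↑w (j + 1) := VRank.step G ↑w w.2 j h1 hwj
  exact h ↑w (fun h' => hw (Subtype.ext h')) ⟨j + 1, by omega, hstep⟩

end Lemmas4
set_option linter.unusedSectionVars false
section Lemmas5
variable {V : Type u} [Finite V]

open SimpleGraph

lemma deg_universal {G : SimpleGraph V} {v : V} (h : IsUniversalVx G v) :
    (G.neighborSet v).ncard = Nat.card V - 1 := by
  have : G.neighborSet v = Set.univ \ {v} := by
    ext u
    simp only [mem_neighborSet, Set.mem_diff, Set.mem_univ, Set.mem_singleton_iff, true_and]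
    exact ⟨fun ha => fun he => ha.ne' he, fun hne => h u hne⟩
  rw [this, Set.ncard_diff (Set.singleton_subset_iff.mpr (Set.mem_univ v)), Set.ncard_univ,
    Set.ncard_singleton]

lemma deg_isolated {G : SimpleGraph V} {v : V} (h : IsIsolatedVx G v) :
    (G.neighborSet v).ncard = 0 := by
  have : G.neighborSet v = ∅ := by
    ext u; simp only [mem_neighborSet, Set.mem_empty_iff_false, iff_false]; exact h u
  rw [this, Set.ncard_empty]

lemma deg_not_isolated_pos {G : SimpleGraph V} {v : V} (h : ¬IsIsolatedVx G v) :
    1 ≤ (G.neighborSet v).ncard := by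
  rw [IsIsolatedVx] at h
  push_neg at h
  obtain ⟨z, hz⟩ := h
  exact (Set.ncard_pos (Set.toFinite _)).mpr ⟨z, hz⟩

lemma deg_not_universal_lt {G : SimpleGraph V} {v : V} (h : ¬IsUniversalVx G v) :
    (G.neighborSet v).ncard < Nat.card V - 1 := by
  rw [IsUniversalVx] at h
  push_neg at h
  obtain ⟨z, hzv, hz⟩ := h
  have hsub : G.neighborSet v ⊆ Set.univ \ {v, z} := by
    intro u hu
    simp only [Set.mem_diff, Set.mem_univ, Set.mem_insert_iff, Set.mem_singleton_iff, true_and]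
    push_neg
    exact ⟨fun he => G.loopless.irrefl v (he ▸ hu), fun he => hz (he ▸ hu)⟩
  have h1 : (G.neighborSet v).ncard ≤ (Set.univ \ ({v, z} : Set V)).ncard :=
    Set.ncard_le_ncard hsub
  have h2 : (Set.univ \ ({v, z} : Set V)).ncard = Nat.card V - 2 := by
    rw [Set.ncard_diff (Set.subset_univ _), Set.ncard_univ, Set.ncard_pair (Ne.symm hzv)]
  have h3 : 2 ≤ Nat.card V := by
    have := Set.ncard_le_ncard (Set.subset_univ ({v, z} : Set V))
    rw [Set.ncard_univ, Set.ncard_pair (Ne.symm hzv)] at this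
    exact this
  omega

lemma deg_induce_image {G : SimpleGraph V} {s : Set V} {v : V} (hv : v ∈ s) :
    Subtype.val '' ((G.induce s).neighborSet ⟨v, hv⟩) = G.neighborSet v ∩ s := by
  ext w
  simp only [Set.mem_image, mem_neighborSet, comap_adj, Function.Embedding.coe_subtype,
    Set.mem_inter_iff]
  constructor
  · rintro ⟨⟨w', hw'⟩, ha, rfl⟩
    exact ⟨ha, hw'⟩
  · rintro ⟨ha, hw⟩
    exact ⟨⟨w, hw⟩, ha, rfl⟩

lemma deg_induce_conn {G : SimpleGraph V} (hc : G.Connected) {v : V}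
    (hv : v ∈ (Boundary G)ᶜ) :
    (G.neighborSet v).ncard
      = ((G.induce (Boundary G)ᶜ).neighborSet ⟨v, hv⟩).ncard + (Boundary G).ncard := by
  have hsplit : G.neighborSet v = (G.neighborSet v ∩ (Boundary G)ᶜ) ∪ Boundary G := by
    ext w
    simp only [Set.mem_union, Set.mem_inter_iff, Set.mem_compl_iff, mem_neighborSet]
    constructor
    · intro ha
      by_cases hw : w ∈ Boundary G
      · exact Or.inr hw
      · exact Or.inl ⟨ha, hw⟩
    · rintro (⟨ha, _⟩ | hw)
      · exact ha
      · have hu : IsUniversalVx G w := (mem_boundary_conn hc).mp hw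
        exact (hu v (fun he => hv (he ▸ hw))).symm
  have hd : Disjoint (G.neighborSet v ∩ (Boundary G)ᶜ) (Boundary G) :=
    Set.disjoint_left.mpr (fun w hw => hw.2)
  rw [hsplit, Set.ncard_union_eq hd (Set.toFinite _) (Set.toFinite _)]
  congr 1
  rw [← deg_induce_image hv, Set.ncard_image_of_injective _ Subtype.val_injective]

lemma deg_induce_disconn {G : SimpleGraph V} (hc : ¬G.Connected) {v : V}
    (hv : v ∈ (Boundary G)ᶜ) :
    (G.neighborSet v).ncard = ((G.induce (Boundary G)ᶜ).neighborSet ⟨v, hv⟩).ncard := by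
  have hsplit : G.neighborSet v = G.neighborSet v ∩ (Boundary G)ᶜ := by
    ext w
    simp only [Set.mem_inter_iff, Set.mem_compl_iff, mem_neighborSet]
    refine ⟨fun ha => ⟨ha, fun hw => ?_⟩, fun h => h.1⟩
    exact ((mem_boundary_disconn hc).mp hw) v ha.symm
  conv_lhs => rw [hsplit]
  rw [← deg_induce_image hv, Set.ncard_image_of_injective _ Subtype.val_injective]

end Lemmas5
section Main
open SimpleGraph

lemma hasRank_of_rank1 {V : Type u} [Finite V] {G : SimpleGraph V} {m : ℕ}
    (h1 : Rank1Cond G) (h : HasRank G m) : m = 1 := by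
  cases h with
  | base => rfl
  | peel _ _ h' => exact absurd h1 h'
  | compl _ _ h' => exact absurd h1 h'

theorem main_aux : ∀ (m : ℕ) {V : Type u} [Finite V] (G : SimpleGraph V), HasRank G m →
    (∀ (v w : V) (j : ℕ), VRank G v m → VRank G w j → j < m → IsoType G w j →
        (G.neighborSet w).ncard < (G.neighborSet v).ncard) ∧
    (∀ (v u : V) (i : ℕ), VRank G v m → VRank G u i → i < m → UnivType G u i →
        (G.neighborSet v).ncard < (G.neighborSet u).ncard) ∧
    (∀ (x y : V) (i j : ℕ), VRank G x i → IsoType G x i → VRank G y j → IsoType G y j →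
        i < j → j < m → (G.neighborSet x).ncard < (G.neighborSet y).ncard) ∧
    (∀ (x y : V) (i j : ℕ), VRank G x i → UnivType G x i → VRank G y j → UnivType G y j →
        i < j → j < m → (G.neighborSet y).ncard < (G.neighborSet x).ncard) := by
  intro m
  induction m using Nat.strong_induction_on with
  | _ m ih =>
    intro V _ G hG
    by_cases h1 : Rank1Cond G
    · have hm1 : m = 1 := hasRank_of_rank1 h1 hG
      subst hm1
      refine ⟨?_, ?_, ?_, ?_⟩
      · intro v w j _ hwj hj _; exact absurd (vrank_pos hwj) (by omega)
      · intro v u i _ hui hi _; exact absurd (vrank_pos hui) (by omega)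
      · intro x y i j _ _ hyj _ hij hj; exact absurd (vrank_pos hyj) (by omega)
      · intro x y i j _ _ hyj _ hij hj; exact absurd (vrank_pos hyj) (by omega)
    · have hm2 : 2 ≤ m := by
        have := hasRank_pos hG
        by_contra h
        have hm1 : m = 1 := by omega
        exact h1 (hasRank_one hG hm1)
      have hG' : HasRank (G.induce (Boundary G)ᶜ) (m - 1) := hasRank_boundary hG h1
      obtain ⟨IH1, IH2, IH3, IH4⟩ := ih (m - 1) (by omega) _ hG'
      refine ⟨?_, ?_, ?_, ?_⟩
      -- Conjunct 1 : kernel vs isolated type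
      · intro v w j hv hwj hj hIso
        obtain ⟨hv', hv''⟩ := vrank_step_inv h1 hv hm2
        rcases Nat.lt_or_ge j 2 with hj1 | hj2
        · -- j = 1
          have hj1 : j = 1 := by have := vrank_pos hwj; omega
          subst hj1
          have hwB : w ∈ Boundary G := vrank_one_mem_boundary h1 hwj
          have hvw : v ≠ w := fun he => hv' (he ▸ hwB)
          by_cases hc : G.Connected
          · exfalso
            have huniv : IsUniversalVx G w := (mem_boundary_conn hc).mp hwB
            exact hIso v hvw ⟨m, by omega, hv⟩ (huniv v hvw)
          · have hwiso : IsIsolatedVx G w := (mem_boundary_disconn hc).mp hwB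
            have hviso : ¬IsIsolatedVx G v := fun h =>
              hv' ((mem_boundary_disconn hc).mpr h)
            have := deg_isolated hwiso
            have := deg_not_isolated_pos hviso
            omega
        · -- j ≥ 2
          obtain ⟨hw', hw''⟩ := vrank_step_inv h1 hwj hj2
          have hIso' := isoType_induce h1 hw' hIso
          have hlt := IH1 ⟨v, hv'⟩ ⟨w, hw'⟩ (j - 1) hv'' hw'' (by omega) hIso'
          by_cases hc : G.Connected
          · rw [deg_induce_conn hc hv', deg_induce_conn hc hw']
            omega
          · rw [deg_induce_disconn hc hv', deg_induce_disconn hc hw']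
            exact hlt
      -- Conjunct 2 : kernel vs universal type
      · intro v u i hv hui hi hUniv
        obtain ⟨hv', hv''⟩ := vrank_step_inv h1 hv hm2
        rcases Nat.lt_or_ge i 2 with hi1 | hi2
        · have hi1 : i = 1 := by have := vrank_pos hui; omega
          subst hi1
          have huB : u ∈ Boundary G := vrank_one_mem_boundary h1 hui
          have hvu : v ≠ u := fun he => hv' (he ▸ huB)
          by_cases hc : G.Connected
          · have huniv : IsUniversalVx G u := (mem_boundary_conn hc).mp huB
            have hvnu : ¬IsUniversalVx G v := fun h =>
              hv' ((mem_boundary_conn hc).mpr h)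
            have := deg_universal huniv
            have := deg_not_universal_lt hvnu
            omega
          · exfalso
            have huiso : IsIsolatedVx G u := (mem_boundary_disconn hc).mp huB
            exact huiso v (hUniv v hvu ⟨m, by omega, hv⟩)
        · obtain ⟨hu', hu''⟩ := vrank_step_inv h1 hui hi2
          have hUniv' := univType_induce h1 hu' hUniv
          have hlt := IH2 ⟨v, hv'⟩ ⟨u, hu'⟩ (i - 1) hv'' hu'' (by omega) hUniv'
          by_cases hc : G.Connected
          · rw [deg_induce_conn hc hv', deg_induce_conn hc hu']
            omega
          · rw [deg_induce_disconn hc hv', deg_induce_disconn hc hu']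
            exact hlt
      -- Conjunct 3 : isolated types increasing
      · intro x y i j hxi hIsox hyj hIsoy hij hj
        have hj2 : 2 ≤ j := by have := vrank_pos hxi; omega
        obtain ⟨hy', hy''⟩ := vrank_step_inv h1 hyj hj2
        rcases Nat.lt_or_ge i 2 with hi1 | hi2
        · have hi1 : i = 1 := by have := vrank_pos hxi; omega
          subst hi1
          have hxB : x ∈ Boundary G := vrank_one_mem_boundary h1 hxi
          have hyx : y ≠ x := fun he => hy' (he ▸ hxB)
          by_cases hc : G.Connected
          · exfalso
            have huniv : IsUniversalVx G x := (mem_boundary_conn hc).mp hxB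
            exact hIsox y hyx ⟨j, by omega, hyj⟩ (huniv y hyx)
          · have hxiso : IsIsolatedVx G x := (mem_boundary_disconn hc).mp hxB
            have hyiso : ¬IsIsolatedVx G y := fun h =>
              hy' ((mem_boundary_disconn hc).mpr h)
            have := deg_isolated hxiso
            have := deg_not_isolated_pos hyiso
            omega
        · obtain ⟨hx', hx''⟩ := vrank_step_inv h1 hxi hi2
          have hIsox' := isoType_induce h1 hx' hIsox
          have hIsoy' := isoType_induce h1 hy' hIsoy
          have hlt := IH3 ⟨x, hx'⟩ ⟨y, hy'⟩ (i - 1) (j - 1) hx'' hIsox' hy'' hIsoy'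
            (by omega) (by omega)
          by_cases hc : G.Connected
          · rw [deg_induce_conn hc hx', deg_induce_conn hc hy']
            omega
          · rw [deg_induce_disconn hc hx', deg_induce_disconn hc hy']
            exact hlt
      -- Conjunct 4 : universal types decreasing
      · intro x y i j hxi hUnivx hyj hUnivy hij hj
        have hj2 : 2 ≤ j := by have := vrank_pos hxi; omega
        obtain ⟨hy', hy''⟩ := vrank_step_inv h1 hyj hj2
        rcases Nat.lt_or_ge i 2 with hi1 | hi2
        · have hi1 : i = 1 := by have := vrank_pos hxi; omega
          subst hi1
          have hxB : x ∈ Boundary G := vrank_one_mem_boundary h1 hxi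
          have hyx : y ≠ x := fun he => hy' (he ▸ hxB)
          by_cases hc : G.Connected
          · have huniv : IsUniversalVx G x := (mem_boundary_conn hc).mp hxB
            have hynu : ¬IsUniversalVx G y := fun h =>
              hy' ((mem_boundary_conn hc).mpr h)
            have := deg_universal huniv
            have := deg_not_universal_lt hynu
            omega
          · exfalso
            have hxiso : IsIsolatedVx G x := (mem_boundary_disconn hc).mp hxB
            exact hxiso y (hUnivx y hyx ⟨j, by omega, hyj⟩)
        · obtain ⟨hx', hx''⟩ := vrank_step_inv h1 hxi hi2
          have hUnivx' := univType_induce h1 hx' hUnivx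
          have hUnivy' := univType_induce h1 hy' hUnivy
          have hlt := IH4 ⟨x, hx'⟩ ⟨y, hy'⟩ (i - 1) (j - 1) hx'' hUnivx' hy'' hUnivy'
            (by omega) (by omega)
          by_cases hc : G.Connected
          · rw [deg_induce_conn hc hx', deg_induce_conn hc hy']
            omega
          · rw [deg_induce_disconn hc hx', deg_induce_disconn hc hy']
            exact hlt

end Main
/-- If `v` is a kernel vertex while `u` is a non-kernel vertex of universal type and
`w` a non-kernel vertex of isolated type, then `deg w < deg v < deg u`; moreover,
among non-kernel vertices, degrees of isolated-type vertices strictly increase with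
rank and degrees of universal-type vertices strictly decrease with rank. -/
theorem stmt_15 {V : Type u} [Finite V] (G : SimpleGraph V) (m : ℕ) (hG : HasRank G m)
    (deg : V → ℕ) (hdeg : ∀ x, deg x = (G.neighborSet x).ncard) :
    (∀ (v u w : V) (i j : ℕ), VRank G v m →
      VRank G u i → i < m → UnivType G u i →
      VRank G w j → j < m → IsoType G w j →
      deg w < deg v ∧ deg v < deg u) ∧
    (∀ (x y : V) (i j : ℕ), VRank G x i → IsoType G x i → VRank G y j → IsoType G y j →
      i < j → j < m → deg x < deg y) ∧
    (∀ (x y : V) (i j : ℕ), VRank G x i → UnivType G x i → VRank G y j → UnivType G y j →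
      i < j → j < m → deg y < deg x) := by
  obtain ⟨A1, A2, A3, A4⟩ := main_aux m G hG
  refine ⟨?_, ?_, ?_⟩
  · intro v u w i j hv hui hi hU hwj hj hI
    simp only [hdeg]
    exact ⟨A1 v w j hv hwj hj hI, A2 v u i hv hui hi hU⟩
  · intro x y i j hx hIx hy hIy hij hj
    simp only [hdeg]
    exact A3 x y i j hx hIx hy hIy hij hj
  · intro x y i j hx hUx hy hUy hij hj
    simp only [hdeg]
    exact A4 x y i j hx hUx hy hUy hij hj
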